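/- (Canonical form / uniqueness of structure) Let k ≥ α + 1 and consider a linear (k,α) MSR exact-regenerating code (β = 1, d = α + k − 1) with systematic nodes 1,…,k. Then there is an equivalent code (same stored subspaces and same passed vectors) in which, for every non-systematic node m, the block decomposition satisfies G^{(m)}_j = Λ^{(m)}_j H^{(m)}_j with Λ^{(m)}_j diagonal and invertible, and the row vectors h^{(m)}_{i,j} (rows of H^{(m)}_j) satisfy h^{(m)}_{i,j} = h_{i,j} independent of m for all i = 1,…,α and j ≠ i; moreover each non-systematic node passes the i-th row of its node matrix for regeneration of systematic node i (1 ≤ i ≤ α). -/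

import Mathlib

open Matrix

lemma aux_vecMul_zero13 {F : Type*} [Field F] {n : Type*} [Fintype n] [DecidableEq n]
    {M : Matrix n n F} (h : IsUnit M.det) {v : n → F} (hv : v ᵥ* M = 0) : v = 0 := by
  by_contra hne
  exact h.ne_zero (Matrix.exists_vecMul_eq_zero_iff.mp ⟨v, hne, hv⟩)

/-- Canonical form for `k ≥ α + 1`: every linear `(k,α)` MSR exact-regenerating code
(systematic nodes `Fin k`, non-systematic nodes `Fin s`; node `m` passes the combination
`x m l` of its rows to regenerate systematic node `l`, helpers being the surviving `k-1`
systematic nodes plus any `α` non-systematic ones) has an equivalent code — same stored row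
spaces, same passed vectors — in which each non-systematic block decomposes as
`G^{(m)}_j = Λ^{(m)}_j H^{(m)}_j` with `Λ^{(m)}_j` invertible diagonal and the direction
rows `h^{(m)}_{i,j} = h_{i,j}` independent of `m` for `j ≠ i`, and each non-systematic node
passes the `i`-th row of its matrix for regeneration of systematic node `i ≤ α`. -/
theorem statement13 {F : Type*} [Field F] {k α s : ℕ}
    (hk : α + 1 ≤ k) (hs : α ≤ s)
    (G : (Fin k ⊕ Fin s) → Matrix (Fin α) (Fin k × Fin α) F)
    (x : (Fin k ⊕ Fin s) → Fin k → Fin α → F)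
    (hsys : ∀ (m : Fin k) (i : Fin α) (q : Fin k × Fin α),
      G (Sum.inl m) i q = if q.1 = m ∧ q.2 = i then 1 else 0)
    (hrecon : ∀ f : Fin k → (Fin k ⊕ Fin s), Function.Injective f →
      IsUnit (Matrix.det (Matrix.of fun p q : Fin k × Fin α => G (f p.1) p.2 q)))
    (hrepair : ∀ (l : Fin k) (D : Finset (Fin s)), D.card = α →
      ∃ Y : Fin α → (Fin k ⊕ Fin s) → F, ∀ (i : Fin α) (q : Fin k × Fin α),
        G (Sum.inl l) i q =
          (∑ m : Fin k, if m ≠ l then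
              Y i (Sum.inl m) * ∑ j, x (Sum.inl m) l j * G (Sum.inl m) j q else 0)
            + ∑ m ∈ D, Y i (Sum.inr m) * ∑ j, x (Sum.inr m) l j * G (Sum.inr m) j q) :
    ∃ (G' : (Fin k ⊕ Fin s) → Matrix (Fin α) (Fin k × Fin α) F)
      (x' : (Fin k ⊕ Fin s) → Fin k → Fin α → F)
      (hcom : Fin α → Fin k → Fin α → F),
      (∀ m, Submodule.span F (Set.range fun i : Fin α => fun q => G' m i q) =
        Submodule.span F (Set.range fun i : Fin α => fun q => G m i q)) ∧
      (∀ m l q, ∑ j, x' m l j * G' m j q = ∑ j, x m l j * G m j q) ∧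
      (∀ m : Fin s, ∃ (lam : Fin α → Fin k → F) (h : Fin α → Fin k → Fin α → F),
        (∀ i j, lam i j ≠ 0) ∧
        (∀ (i : Fin α) (j : Fin k) (t : Fin α),
          G' (Sum.inr m) i (j, t) = lam i j * h i j t) ∧
        (∀ (i : Fin α) (j : Fin k), (j : ℕ) ≠ (i : ℕ) → h i j = hcom i j)) ∧
      (∀ (m : Fin s) (i : Fin k) (hi : (i : ℕ) < α),
        x' (Sum.inr m) i = Pi.single (⟨(i : ℕ), hi⟩ : Fin α) 1) := by
  classical
  -- trivial case α = 0
  rcases Nat.eq_zero_or_pos α with hα | hα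
  · subst hα
    refine ⟨G, x, fun i => i.elim0, fun m => rfl, fun m l q => rfl, ?_, ?_⟩
    · intro m
      exact ⟨fun i j => 1, fun i j t => 0, fun i => i.elim0, fun i => i.elim0,
        fun i => i.elim0⟩
    · intro m i hi; omega
  have hαk : α < k := hk
  -- the embedding of Fin α into Fin k
  set emb : Fin α → Fin k := fun i => ⟨i.1, lt_trans i.2 hαk⟩ with hemb
  have hembne : ∀ i i' : Fin α, i ≠ i' → emb i' ≠ emb i := by
    intro i i' hne h
    exact hne (Fin.ext (by simpa [hemb, Fin.ext_iff] using h.symm))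
  -- passed vectors of non-systematic nodes
  set qv : Fin s → Fin k → (Fin k × Fin α) → F :=
    fun m l r => ∑ j, x (Sum.inr m) l j * G (Sum.inr m) j r with hqv
  -- Step A: each block of a non-systematic node matrix is nonsingular
  have hGb : ∀ (m : Fin s) (j : Fin k) (c : Fin α → F),
      (∀ t' : Fin α, ∑ t, c t * G (Sum.inr m) t (j, t') = 0) → c = 0 := by
    intro m j c hc
    set f : Fin k → Fin k ⊕ Fin s := fun p => if p = j then Sum.inr m else Sum.inl p with hf
    have hfinj : Function.Injective f := by
      intro a b hab
      by_cases ha : a = j <;> by_cases hb : b = j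
      · rw [ha, hb]
      · simp [hf, ha, hb] at hab
      · simp [hf, ha, hb] at hab
      · simpa [hf, ha, hb] using hab
    have hM := hrecon f hfinj
    set u : Fin k × Fin α → F :=
      fun p => if p.1 = j then c p.2 else -(∑ t, c t * G (Sum.inr m) t p) with hu
    have huM : u ᵥ* (Matrix.of fun p q : Fin k × Fin α => G (f p.1) p.2 q) = 0 := by
      funext r
      have hexp : (u ᵥ* (Matrix.of fun p q : Fin k × Fin α => G (f p.1) p.2 q)) r
          = ∑ p1 : Fin k, ∑ p2 : Fin α, u (p1, p2) * G (f p1) p2 r := by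
        simp [Matrix.vecMul, dotProduct, Fintype.sum_prod_type]
      rw [Pi.zero_apply, hexp]
      have hsplit : ∀ p1 : Fin k, (∑ p2 : Fin α, u (p1, p2) * G (f p1) p2 r)
          = if p1 = j then ∑ t, c t * G (Sum.inr m) t r
            else (if r.1 = p1 then u (p1, r.2) else 0) := by
        intro p1
        by_cases hp : p1 = j
        · subst hp; simp [hu, hf]
        · have hfp : f p1 = Sum.inl p1 := by simp [hf, hp]
          have h1 : ∀ p2 : Fin α, u (p1, p2) * G (f p1) p2 r
              = if r.1 = p1 ∧ r.2 = p2 then u (p1, p2) else 0 := by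
            intro p2
            rw [hfp, hsys]
            by_cases hcond : r.1 = p1 ∧ r.2 = p2 <;> simp [hcond]
          rw [Finset.sum_congr rfl fun p2 _ => h1 p2]
          by_cases hr : r.1 = p1
          · subst hr
            simp [hp]
          · simp [hr, hp]
      rw [Finset.sum_congr rfl fun p1 _ => hsplit p1]
      rw [← Finset.add_sum_erase _ _ (Finset.mem_univ j)]
      rw [if_pos rfl]
      have herase : ∀ p1 ∈ Finset.univ.erase j,
          (if p1 = j then ∑ t, c t * G (Sum.inr m) t r
            else (if r.1 = p1 then u (p1, r.2) else 0))
          = if r.1 = p1 then u (p1, r.2) else 0 := by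
        intro p1 hp1
        rw [if_neg (Finset.ne_of_mem_erase hp1)]
      rw [Finset.sum_congr rfl herase]
      by_cases hr : r.1 = j
      · have hz : ∀ p1 ∈ Finset.univ.erase j,
            (if r.1 = p1 then u (p1, r.2) else 0) = 0 := by
          intro p1 hp1
          rw [if_neg]
          rw [hr]
          exact fun h => (Finset.ne_of_mem_erase hp1) h.symm
        rw [Finset.sum_congr rfl hz, Finset.sum_const_zero, add_zero]
        have hrr : r = (j, r.2) := by rw [← hr]
        rw [hrr]
        exact hc r.2
      · rw [Finset.sum_ite_eq (Finset.univ.erase j) r.1 (fun p1 => u (p1, r.2))]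
        rw [if_pos (Finset.mem_erase.mpr ⟨hr, Finset.mem_univ _⟩)]
        have hur : u (r.1, r.2) = -(∑ t, c t * G (Sum.inr m) t r) := by
          simp only [hu]
          rw [if_neg hr]
        rw [hur]
        exact add_neg_cancel _
    have hu0 := aux_vecMul_zero13 hM huM
    funext t
    have h2 : u (j, t) = 0 := by rw [hu0]; rfl
    simpa [hu] using h2
  -- Step B: restated repair equations
  have hrep : ∀ (l : Fin k) (D : Finset (Fin s)), D.card = α →
      ∃ Y : Fin α → (Fin k ⊕ Fin s) → F,
        (∀ i t : Fin α,
          (if t = i then (1:F) else 0) = ∑ m' ∈ D, Y i (Sum.inr m') * qv m' l (l, t)) ∧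
        (∀ j : Fin k, j ≠ l → ∀ i t : Fin α,
          0 = Y i (Sum.inl j) * x (Sum.inl j) l t
            + ∑ m' ∈ D, Y i (Sum.inr m') * qv m' l (j, t)) := by
    intro l D hD
    obtain ⟨Y, hY⟩ := hrepair l D hD
    have key : ∀ (i t : Fin α) (j : Fin k),
        (if j = l ∧ t = i then (1:F) else 0)
          = (if j ≠ l then Y i (Sum.inl j) * x (Sum.inl j) l t else 0)
            + ∑ m' ∈ D, Y i (Sum.inr m') * qv m' l (j, t) := by
      intro i t j
      have h1 := hY i (j, t)
      rw [hsys] at h1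
      have h2 : ∀ m' : Fin k,
          (if m' ≠ l then
              Y i (Sum.inl m') * ∑ j', x (Sum.inl m') l j' * G (Sum.inl m') j' (j, t) else 0)
          = if m' = j ∧ j ≠ l then Y i (Sum.inl j) * x (Sum.inl j) l t else 0 := by
        intro m'
        have h3 : ∑ j', x (Sum.inl m') l j' * G (Sum.inl m') j' (j, t)
            = if j = m' then x (Sum.inl m') l t else 0 := by
          have h4 : ∀ j' : Fin α, x (Sum.inl m') l j' * G (Sum.inl m') j' (j, t)
              = if j = m' ∧ t = j' then x (Sum.inl m') l j' else 0 := by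
            intro j'
            rw [hsys]
            by_cases hcond : j = m' ∧ t = j' <;> simp [hcond]
          rw [Finset.sum_congr rfl fun j' _ => h4 j']
          by_cases hjm : j = m'
          · simp [hjm]
          · simp [hjm]
        rw [h3]
        by_cases hml : m' = l
        · subst hml
          rw [if_neg (by simp), if_neg (by rintro ⟨rfl, h⟩; exact h rfl)]
        · rw [if_pos hml]
          by_cases hjm : j = m'
          · subst hjm
            rw [if_pos rfl, if_pos ⟨rfl, hml⟩]
          · rw [if_neg hjm, mul_zero, if_neg (fun h => hjm h.1.symm)]
      rw [Finset.sum_congr rfl fun m' _ => h2 m'] at h1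
      have h4 : (∑ m' : Fin k, if m' = j ∧ j ≠ l
          then Y i (Sum.inl j) * x (Sum.inl j) l t else 0)
          = if j ≠ l then Y i (Sum.inl j) * x (Sum.inl j) l t else 0 := by
        by_cases hjl : j ≠ l
        · simp [hjl, Finset.sum_ite_eq']
        · simp [hjl]
      rw [h4] at h1
      exact h1
    refine ⟨Y, fun i t => ?_, fun j hjl i t => ?_⟩
    · have h5 := key i t l
      rw [if_neg (show ¬(l ≠ l) from fun h => h rfl), zero_add] at h5
      simpa using h5
    · have := key i t j
      rw [if_neg (fun h => hjl h.1), if_pos hjl] at this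
      exact this
  -- Step B': invertible repair matrices, packaged form
  have hQY : ∀ (l : Fin k) (D : Finset (Fin s)), D.card = α →
      ∃ (w : Fin α → Fin s) (Yb : Matrix (Fin α) (Fin α) F),
        (∀ m' ∈ D, ∃ r, w r = m') ∧
        ((Matrix.of fun r t => qv (w r) l (l, t)) * Yb = 1) ∧
        (∀ j : Fin k, j ≠ l → ∃ a : Fin α → F, ∀ i t : Fin α,
          ∑ r, Yb i r * qv (w r) l (j, t) = a i * x (Sum.inl j) l t) := by
    intro l D hD
    obtain ⟨Y, hY1, hY2⟩ := hrep l D hD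
    set e : {y // y ∈ D} ≃ Fin α := D.equivFinOfCardEq hD with he
    set w : Fin α → Fin s := fun r => ((e.symm r : {y // y ∈ D}) : Fin s) with hw
    have hsum : ∀ g : Fin s → F, ∑ m' ∈ D, g m' = ∑ r, g (w r) := by
      intro g
      rw [← Finset.sum_coe_sort D g]
      exact (Equiv.sum_comp e.symm fun a => g ↑a).symm
    have hYQ : (Matrix.of fun i r => Y i (Sum.inr (w r)))
        * (Matrix.of fun r t => qv (w r) l (l, t)) = 1 := by
      ext i t
      rw [Matrix.mul_apply, Matrix.one_apply]
      simp only [Matrix.of_apply]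
      have h5 := hY1 i t
      rw [hsum (fun m' => Y i (Sum.inr m') * qv m' l (l, t))] at h5
      rw [← h5]
      by_cases h : i = t
      · simp [h]
      · rw [if_neg (fun hh : t = i => h hh.symm), if_neg h]
    refine ⟨w, Matrix.of fun i r => Y i (Sum.inr (w r)), ?_, mul_eq_one_comm.mp hYQ, ?_⟩
    · intro m' hm'
      exact ⟨e ⟨m', hm'⟩, by simp [hw]⟩
    · intro j hjl
      refine ⟨fun i => -(Y i (Sum.inl j)), fun i t => ?_⟩
      have h6 := hY2 j hjl i t
      rw [hsum (fun m' => Y i (Sum.inr m') * qv m' l (j, t))] at h6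
      have h7 : ∑ r, Y i (Sum.inr (w r)) * qv (w r) l (j, t)
          = -(Y i (Sum.inl j) * x (Sum.inl j) l t) :=
        eq_neg_of_add_eq_zero_right h6.symm
      simpa [neg_mul] using h7
  -- existence of a repair set containing a given node
  have hDex : ∀ m : Fin s, ∃ D : Finset (Fin s), m ∈ D ∧ D.card = α := by
    intro m
    obtain ⟨D, hsub, hcard⟩ := Finset.exists_superset_card_eq (s := {m})
      (by simpa using Nat.succ_le_of_lt hα) (by simpa using hs)
    exact ⟨D, hsub (Finset.mem_singleton_self m), hcard⟩
  -- repair vectors are nonzero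
  have hxnz : ∀ (m : Fin s) (l : Fin k), x (Sum.inr m) l ≠ 0 := by
    intro m l hx0
    obtain ⟨D, hmD, hD⟩ := hDex m
    obtain ⟨w, Yb, hwsur, hQY1, _⟩ := hQY l D hD
    obtain ⟨r, hr⟩ := hwsur m hmD
    have hq0 : ∀ t, qv (w r) l (l, t) = 0 := by
      intro t
      simp [hqv, hr, hx0]
    have h3 : (0:F) = 1 := by
      calc (0:F) = ∑ t, qv (w r) l (l, t) * Yb t r := by simp [hq0]
        _ = ((Matrix.of fun r t => qv (w r) l (l, t)) * Yb) r r := by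
            rw [Matrix.mul_apply]; rfl
        _ = (1 : Matrix (Fin α) (Fin α) F) r r := by rw [hQY1]
        _ = 1 := Matrix.one_apply_eq r
    exact zero_ne_one h3
  -- interference alignment with nonzero coefficient
  have halign' : ∀ (m : Fin s) (l j : Fin k), j ≠ l →
      ∃ β : F, β ≠ 0 ∧ ∀ t, qv m l (j, t) = β * x (Sum.inl j) l t := by
    intro m l j hjl
    obtain ⟨D, hmD, hD⟩ := hDex m
    obtain ⟨w, Yb, hwsur, hQY1, hQY2⟩ := hQY l D hD
    obtain ⟨r, hr⟩ := hwsur m hmD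
    obtain ⟨a, ha⟩ := hQY2 j hjl
    set Qj : Matrix (Fin α) (Fin α) F := Matrix.of fun r' t => qv (w r') l (j, t) with hQj
    have h1 : Yb * Qj = Matrix.of fun i t => a i * x (Sum.inl j) l t := by
      ext i t
      rw [Matrix.mul_apply]
      exact ha i t
    have h2 : Qj = (Matrix.of fun r' t => qv (w r') l (l, t)) * (Yb * Qj) := by
      rw [← Matrix.mul_assoc, hQY1, Matrix.one_mul]
    rw [h1] at h2
    have h3 : ∀ t, qv m l (j, t) = (∑ i, qv m l (l, i) * a i) * x (Sum.inl j) l t := by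
      intro t
      have h4 : Qj r t = ∑ i, qv (w r) l (l, i) * (a i * x (Sum.inl j) l t) := by
        rw [h2]; rw [Matrix.mul_apply]; rfl
      rw [hQj] at h4
      simp only [Matrix.of_apply] at h4
      rw [hr] at h4
      rw [h4, Finset.sum_mul]
      exact Finset.sum_congr rfl fun i _ => (mul_assoc _ _ _).symm
    refine ⟨∑ i, qv m l (l, i) * a i, ?_, h3⟩
    intro hβ0
    have hq0 : ∀ t, qv m l (j, t) = 0 := fun t => by rw [h3 t, hβ0, zero_mul]
    have hxz := hGb m j (x (Sum.inr m) l) (fun t' => by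
      have h5 := hq0 t'
      simpa [hqv] using h5)
    exact hxnz m l hxz
  -- choose alignment coefficients
  choose βg hβg0 hβg using fun (m : Fin s) (i : Fin α) (j : Fin k) (h : j ≠ emb i) =>
    halign' m (emb i) j h
  -- the extra block index
  set j0 : Fin k := ⟨α, hαk⟩ with hj0def
  have hj0 : ∀ i : Fin α, j0 ≠ emb i := by
    intro i h
    have h1 := congrArg Fin.val h
    simp [hj0def, hemb] at h1
    have h2 := i.2
    omega
  -- the repair matrix of each non-systematic node
  set X : Fin s → Matrix (Fin α) (Fin α) F :=
    fun m => Matrix.of fun i t => x (Sum.inr m) (emb i) t with hX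
  have hXu : ∀ m, IsUnit (X m).det := by
    intro m
    rw [isUnit_iff_ne_zero]
    intro hdet
    obtain ⟨d, hdne, hdX⟩ := Matrix.exists_vecMul_eq_zero_iff.mpr hdet
    have hd : ∀ t : Fin α, ∑ i, d i * x (Sum.inr m) (emb i) t = 0 := by
      intro t
      have h1 := congrFun hdX t
      simpa [Matrix.vecMul, dotProduct, hX] using h1
    have hi0 : ∃ i, d i ≠ 0 := by
      by_contra hcon; push_neg at hcon; exact hdne (funext hcon)
    obtain ⟨i₀, hi₀⟩ := hi0
    set d' : Fin s → Fin α → F :=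
      fun m' i => d i * βg m i j0 (hj0 i) / βg m' i j0 (hj0 i) with hd'
    have hd'i₀ : ∀ m', d' m' i₀ ≠ 0 := fun m' =>
      div_ne_zero (mul_ne_zero hi₀ (hβg0 m i₀ j0 (hj0 i₀))) (hβg0 m' i₀ j0 (hj0 i₀))
    have hswap : ∀ (m' : Fin s) (c : Fin α → F) (r' : Fin k × Fin α),
        ∑ i, c i * qv m' (emb i) r'
          = ∑ t, (∑ i, c i * x (Sum.inr m') (emb i) t) * G (Sum.inr m') t r' := by
      intro m' c r'
      simp only [hqv, Finset.mul_sum, Finset.sum_mul]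
      rw [Finset.sum_comm]
      exact Finset.sum_congr rfl fun t _ => Finset.sum_congr rfl fun i _ =>
        (mul_assoc _ _ _).symm
    have hF2 : ∀ m' : Fin s, ∀ t : Fin α, ∑ i, d' m' i * x (Sum.inr m') (emb i) t = 0 := by
      intro m'
      have hF1 : ∀ t' : Fin α,
          ∑ t, (∑ i, d' m' i * x (Sum.inr m') (emb i) t) * G (Sum.inr m') t (j0, t') = 0 := by
        intro t'
        rw [← hswap m' (d' m') (j0, t')]
        have h5 : ∀ i : Fin α, d' m' i * qv m' (emb i) (j0, t') = d i * qv m (emb i) (j0, t') := by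
          intro i
          rw [hβg m' i j0 (hj0 i) t', hβg m i j0 (hj0 i) t', hd']
          have hb1 := hβg0 m' i j0 (hj0 i)
          field_simp
        rw [Finset.sum_congr rfl fun i _ => h5 i]
        rw [hswap m d (j0, t')]
        simp [hd]
      have h6 := hGb m' j0 (fun t => ∑ i, d' m' i * x (Sum.inr m') (emb i) t) hF1
      intro t
      exact congrFun h6 t
    have hF3 : ∀ (m' : Fin s) (r' : Fin k × Fin α), ∑ i, d' m' i * qv m' (emb i) r' = 0 := by
      intro m' r'
      rw [hswap m' (d' m') r']
      simp [hF2 m']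
    -- each block-i₀ component of the passed vector lies in the interference span
    have hF5 : ∀ m' : Fin s, ∃ cc : Fin α → F, ∀ t, qv m' (emb i₀) (emb i₀, t)
        = ∑ i ∈ Finset.univ.erase i₀, cc i * x (Sum.inl (emb i₀)) (emb i) t := by
      intro m'
      set cc : Fin α → F := fun i =>
        if h : i = i₀ then 0
        else (-1 / d' m' i₀) * (d' m' i * βg m' i (emb i₀) (hembne i i₀ h)) with hcc
      refine ⟨cc, fun t => ?_⟩
      have hB : ∑ i ∈ Finset.univ.erase i₀, d' m' i * qv m' (emb i) (emb i₀, t)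
          = -(d' m' i₀ * qv m' (emb i₀) (emb i₀, t)) := by
        have h6 := hF3 m' (emb i₀, t)
        rw [← Finset.add_sum_erase _ _ (Finset.mem_univ i₀)] at h6
        linear_combination h6
      have hd0 := hd'i₀ m'
      calc qv m' (emb i₀) (emb i₀, t)
          = (-1 / d' m' i₀) * -(d' m' i₀ * qv m' (emb i₀) (emb i₀, t)) := by
            field_simp
        _ = (-1 / d' m' i₀) * ∑ i ∈ Finset.univ.erase i₀,
              d' m' i * qv m' (emb i) (emb i₀, t) := by rw [hB]
        _ = ∑ i ∈ Finset.univ.erase i₀,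
              (-1 / d' m' i₀) * (d' m' i * qv m' (emb i) (emb i₀, t)) :=
            Finset.mul_sum _ _ _
        _ = ∑ i ∈ Finset.univ.erase i₀, cc i * x (Sum.inl (emb i₀)) (emb i) t := by
            apply Finset.sum_congr rfl
            intro i hi
            have hne := Finset.ne_of_mem_erase hi
            rw [hβg m' i (emb i₀) (hembne i i₀ hne) t]
            simp only [hcc]
            rw [dif_neg hne]
            ring
    -- contradiction via rank
    obtain ⟨D, hmD, hD⟩ := hDex m
    obtain ⟨w, Yb, hwsur, hQb1, _⟩ := hQY (emb i₀) D hD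
    choose ccf hccf using hF5
    set C : Matrix (Fin α) {i : Fin α // i ≠ i₀} F :=
      Matrix.of fun r i => ccf (w r) i.1 with hC
    set V : Matrix {i : Fin α // i ≠ i₀} (Fin α) F :=
      Matrix.of fun i t => x (Sum.inl (emb i₀)) (emb i.1) t with hV
    have hfact : (Matrix.of fun r t => qv (w r) (emb i₀) (emb i₀, t)) = C * V := by
      ext r t
      rw [Matrix.mul_apply]
      simp only [Matrix.of_apply, hC, hV]
      rw [hccf (w r) t]
      exact Finset.sum_subtype _ (fun i => by simp) _
    have hone : (1 : Matrix (Fin α) (Fin α) F) = C * (V * Yb) := by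
      rw [← Matrix.mul_assoc, ← hfact, hQb1]
    have hcard : Fintype.card {i : Fin α // i ≠ i₀} = α - 1 := by
      rw [Fintype.card_of_subtype (Finset.univ.erase i₀) (fun i => by simp)]
      rw [Finset.card_erase_of_mem (Finset.mem_univ i₀), Finset.card_univ, Fintype.card_fin]
    have hrank1 : (1 : Matrix (Fin α) (Fin α) F).rank = α := by
      rw [Matrix.rank_one, Fintype.card_fin]
    have hrank2 : (C * (V * Yb)).rank ≤ α - 1 := by
      refine le_trans (Matrix.rank_mul_le_left _ _) ?_
      refine le_trans (Matrix.rank_le_card_width C) ?_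
      rw [hcard]
    have hle : α ≤ α - 1 := by
      have h9 : (1 : Matrix (Fin α) (Fin α) F).rank ≤ α - 1 := by rw [hone]; exact hrank2
      rwa [hrank1] at h9
    omega
  have hXinv : ∀ m, (X m)⁻¹ * X m = 1 := fun m => Matrix.nonsing_inv_mul _ (hXu m)
  have hXinv' : ∀ m, X m * (X m)⁻¹ = 1 := fun m => Matrix.mul_nonsing_inv _ (hXu m)
  -- the equivalent code
  refine ⟨Sum.elim (fun a => G (Sum.inl a)) (fun m => Matrix.of fun i r => qv m (emb i) r),
    Sum.elim (fun a => x (Sum.inl a)) (fun m l => (x (Sum.inr m) l) ᵥ* (X m)⁻¹),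
    fun i j => x (Sum.inl j) (emb i), ?_, ?_, ?_, ?_⟩
  · -- spans agree
    intro m
    cases m with
    | inl a => rfl
    | inr m =>
      apply le_antisymm
      · rw [Submodule.span_le]
        rintro _ ⟨i, rfl⟩
        have hrow : (fun r => (Sum.elim (fun a => G (Sum.inl a))
            (fun m => Matrix.of fun i r => qv m (emb i) r) (Sum.inr m)) i r)
            = ∑ t : Fin α, X m i t • (fun r => G (Sum.inr m) t r) := by
          funext r
          simp [hqv, hX, Finset.sum_apply]
        have hmem : (∑ t : Fin α, X m i t • (fun r => G (Sum.inr m) t r)) ∈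
            Submodule.span F (Set.range fun i : Fin α => fun q => G (Sum.inr m) i q) :=
          Submodule.sum_mem _ fun t _ =>
            Submodule.smul_mem _ _ (Submodule.subset_span ⟨t, rfl⟩)
        exact Set.mem_of_eq_of_mem hrow hmem
      · rw [Submodule.span_le]
        rintro _ ⟨t, rfl⟩
        have hrow : (fun r => G (Sum.inr m) t r)
            = ∑ i : Fin α, (X m)⁻¹ t i • (fun r => (Sum.elim (fun a => G (Sum.inl a))
                (fun m => Matrix.of fun i r => qv m (emb i) r) (Sum.inr m)) i r) := by
          funext r
          have h1 : ∑ i, (X m)⁻¹ t i * qv m (emb i) r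
              = ∑ j, ((X m)⁻¹ * X m) t j * G (Sum.inr m) j r := by
            simp only [hqv, Matrix.mul_apply, Finset.sum_mul, Finset.mul_sum]
            rw [Finset.sum_comm]
            refine Finset.sum_congr rfl fun j _ => Finset.sum_congr rfl fun i _ => ?_
            rw [hX]
            simp only [Matrix.of_apply]
            ring
          rw [hXinv m] at h1
          have h2 : ∑ j, (1 : Matrix (Fin α) (Fin α) F) t j * G (Sum.inr m) j r
              = G (Sum.inr m) t r := by
            simp [Matrix.one_apply]
          rw [h2] at h1
          rw [Finset.sum_apply]
          simp only [Pi.smul_apply, Sum.elim_inr, Matrix.of_apply, smul_eq_mul]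
          exact h1.symm
        have hmem : (∑ i : Fin α, (X m)⁻¹ t i • (fun r => (Sum.elim (fun a => G (Sum.inl a))
            (fun m => Matrix.of fun i r => qv m (emb i) r) (Sum.inr m)) i r)) ∈
            Submodule.span F (Set.range fun i : Fin α => fun q =>
              (Sum.elim (fun a => G (Sum.inl a))
                (fun m => Matrix.of fun i r => qv m (emb i) r) (Sum.inr m)) i q) :=
          Submodule.sum_mem _ fun i _ =>
            Submodule.smul_mem _ _ (Submodule.subset_span ⟨i, rfl⟩)
        exact Set.mem_of_eq_of_mem hrow hmem
  · -- passed vectors agree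
    intro m l r
    cases m with
    | inl a => rfl
    | inr m =>
      have hu : ∀ t, ∑ j, ((x (Sum.inr m) l) ᵥ* (X m)⁻¹) j * x (Sum.inr m) (emb j) t
          = x (Sum.inr m) l t := by
        intro t
        have h2 : (((x (Sum.inr m) l) ᵥ* (X m)⁻¹) ᵥ* X m) = x (Sum.inr m) l := by
          rw [Matrix.vecMul_vecMul, hXinv m, Matrix.vecMul_one]
        have h3 := congrFun h2 t
        simpa [Matrix.vecMul, dotProduct, hX] using h3
      show ∑ j, ((x (Sum.inr m) l) ᵥ* (X m)⁻¹) j * qv m (emb j) r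
          = ∑ j, x (Sum.inr m) l j * G (Sum.inr m) j r
      calc ∑ j, ((x (Sum.inr m) l) ᵥ* (X m)⁻¹) j * qv m (emb j) r
          = ∑ j, ∑ t, ((x (Sum.inr m) l) ᵥ* (X m)⁻¹) j
              * (x (Sum.inr m) (emb j) t * G (Sum.inr m) t r) := by
            simp only [hqv, Finset.mul_sum]
        _ = ∑ t, ∑ j, ((x (Sum.inr m) l) ᵥ* (X m)⁻¹) j
              * (x (Sum.inr m) (emb j) t * G (Sum.inr m) t r) := Finset.sum_comm
        _ = ∑ t, (∑ j, ((x (Sum.inr m) l) ᵥ* (X m)⁻¹) j * x (Sum.inr m) (emb j) t)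
              * G (Sum.inr m) t r := by
            refine Finset.sum_congr rfl fun t _ => ?_
            rw [Finset.sum_mul]
            exact Finset.sum_congr rfl fun j _ => (mul_assoc _ _ _).symm
        _ = ∑ t, x (Sum.inr m) l t * G (Sum.inr m) t r := by
            refine Finset.sum_congr rfl fun t _ => ?_
            rw [hu t]
  · -- block decomposition
    intro m
    refine ⟨fun i j => if h : j = emb i then 1 else βg m i j h,
      fun i j => if h : j = emb i then (fun t => qv m (emb i) (emb i, t))
        else x (Sum.inl j) (emb i), ?_, ?_, ?_⟩
    · intro i j
      show (if h : j = emb i then (1:F) else βg m i j h) ≠ 0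
      by_cases h : j = emb i
      · rw [dif_pos h]; exact one_ne_zero
      · rw [dif_neg h]; exact hβg0 m i j h
    · intro i j t
      show qv m (emb i) (j, t) = (if h : j = emb i then (1:F) else βg m i j h)
        * ((if h : j = emb i then (fun t => qv m (emb i) (emb i, t))
            else x (Sum.inl j) (emb i)) t)
      by_cases h : j = emb i
      · rw [dif_pos h, dif_pos h, one_mul]
        subst h
        rfl
      · rw [dif_neg h, dif_neg h]
        exact hβg m i j h t
    · intro i j hne
      show (if h : j = emb i then (fun t => qv m (emb i) (emb i, t))
          else x (Sum.inl j) (emb i)) = x (Sum.inl j) (emb i)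
      rw [dif_neg (fun h => hne (by rw [h]))]
  · -- repair vectors are unit vectors
    intro m i hi
    have hembi : emb ⟨(i:ℕ), hi⟩ = i := Fin.ext rfl
    have h1 : (Pi.single (⟨(i:ℕ), hi⟩ : Fin α) (1:F)) ᵥ* X m = x (Sum.inr m) i := by
      funext t
      simp only [Matrix.vecMul, dotProduct]
      rw [Finset.sum_eq_single (⟨(i:ℕ), hi⟩ : Fin α)]
      · rw [Pi.single_eq_same, one_mul, hX]
        simp only [Matrix.of_apply]
        rw [hembi]
      · intro b _ hb
        rw [Pi.single_eq_of_ne hb, zero_mul]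
      · intro hmem
        exact absurd (Finset.mem_univ _) hmem
    simp only [Sum.elim_inr]
    rw [← h1, Matrix.vecMul_vecMul, hXinv' m, Matrix.vecMul_one]
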